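/- Let D and C be (not necessarily rigid) monoidal abelian categories whose tensor products are right exact in each variable, let D~ be a monoidal subcategory of D, and let F : D → C be a right exact functor whose restriction to D~ carries the structure of a monoidal functor. Assume that every object X of D admits a right exact sequence Q → P → X → 0 with Q and P objects of D~ which are projective in a suitable abelian full subcategory of D containing X. Then F admits the structure of a monoidal functor on all of D extending the given structure on D~. -/

import Mathlib

open CategoryTheory CategoryTheory.Limits MonoidalCategory

universe v₁ v₂ u₁ u₂

/-- A pair of composable morphisms `f : X ⟶ Y`, `g : Y ⟶ Z` forms a right exact sequence
`X ⟶ Y ⟶ Z ⟶ 0`. -/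
def RightExactSeq {C : Type u₁} [Category.{v₁} C] [Abelian C] {X Y Z : C}
    (f : X ⟶ Y) (g : Y ⟶ Z) : Prop :=
  ∃ w : f ≫ g = 0, Epi g ∧ (ShortComplex.mk f g w).Exact

/-- A functor between abelian categories is right exact if it preserves right exact
sequences. -/
def IsRightExactFunctor {C : Type u₁} [Category.{v₁} C] [Abelian C]
    {D : Type u₂} [Category.{v₂} D] [Abelian D] (F : C ⥤ D) : Prop :=
  ∀ ⦃X Y Z : C⦄ (f : X ⟶ Y) (g : Y ⟶ Z),
    RightExactSeq f g → RightExactSeq (F.map f) (F.map g)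

section Aux
variable {C : Type u₁} [Category.{v₁} C] [Abelian C]

lemma RightExactSeq.w {X Y Z : C} {f : X ⟶ Y} {g : Y ⟶ Z} (h : RightExactSeq f g) :
    f ≫ g = 0 := h.choose

lemma RightExactSeq.epi {X Y Z : C} {f : X ⟶ Y} {g : Y ⟶ Z} (h : RightExactSeq f g) :
    Epi g := h.choose_spec.1

lemma rightExactSeq_of_epi {X Y : C} (g : X ⟶ Y) [Epi g] :
    RightExactSeq (kernel.ι g) g :=
  ⟨kernel.condition g, inferInstance,
    ShortComplex.exact_of_f_is_kernel _ (kernelIsKernel g)⟩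

lemma rightExactSeq_zero_id (A B : C) : RightExactSeq (0 : A ⟶ B) (𝟙 B) :=
  ⟨zero_comp, inferInstance, (ShortComplex.exact_iff_mono _ rfl).2 inferInstance⟩

lemma RightExactSeq.desc {X Y Z T : C} {f : X ⟶ Y} {g : Y ⟶ Z}
    (h : RightExactSeq f g) {φ : Y ⟶ T} (hφ : f ≫ φ = 0) :
    ∃ ψ : Z ⟶ T, g ≫ ψ = φ := by
  obtain ⟨w, hepi, hex⟩ := h
  haveI := hepi
  exact hex.desc' φ hφ

variable {D : Type u₂} [Category.{v₂} D] [Abelian D]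

lemma IsRightExactFunctor.map_zero {F : C ⥤ D} (hF : IsRightExactFunctor F)
    (A B : C) : F.map (0 : A ⟶ B) = 0 := by
  obtain ⟨w, -, -⟩ := hF _ _ (rightExactSeq_zero_id A B)
  simpa using w

lemma IsRightExactFunctor.epi_map {F : C ⥤ D} (hF : IsRightExactFunctor F)
    {A B : C} (g : A ⟶ B) [Epi g] : Epi (F.map g) :=
  (hF _ _ (rightExactSeq_of_epi g)).epi

end Aux

set_option maxHeartbeats 2000000 in
/-- Let `D`, `C` be (not necessarily rigid) abelian monoidal categories whose tensor
products are right exact in each variable, let `S` cut out a monoidal subcategory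
`D~ ⊆ D`, and let `F : D ⥤ C` be a right exact functor whose restriction to `D~` is
equipped with the structure of a monoidal functor (unit isomorphism `ε`, tensorator `μ`
natural and coherent on `D~`).  Assume every object `X` of `D` admits a right exact
sequence `Q → P → X → 0` with `Q`, `P` projective objects belonging to `D~`.  Then the
monoidal structure extends to all of `F`: there is a tensorator `μ'` defined for all
objects of `D`, agreeing with `μ` on `D~`, natural, and satisfying (together with `ε`)
the associativity and unitality constraints of a monoidal functor. -/
theorem stmt17 {D : Type u₁} [Category.{v₁} D] [Abelian D] [MonoidalCategory D]
    {C : Type u₂} [Category.{v₂} C] [Abelian C] [MonoidalCategory C]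
    (htD : ∀ X : D, IsRightExactFunctor (tensorLeft X) ∧ IsRightExactFunctor (tensorRight X))
    (htC : ∀ X : C, IsRightExactFunctor (tensorLeft X) ∧ IsRightExactFunctor (tensorRight X))
    (S : D → Prop) (hS1 : S (𝟙_ D)) (hStensor : ∀ X Y : D, S X → S Y → S (X ⊗ Y))
    (F : D ⥤ C) (hF : IsRightExactFunctor F)
    (ε : F.obj (𝟙_ D) ≅ 𝟙_ C)
    (μ : ∀ X Y : D, S X → S Y → (F.obj X ⊗ F.obj Y ≅ F.obj (X ⊗ Y)))
    (hμnat : ∀ {X X' Y Y' : D} (hX : S X) (hX' : S X') (hY : S Y) (hY' : S Y')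
      (f : X ⟶ X') (g : Y ⟶ Y'),
        (F.map f ⊗ₘ F.map g) ≫ (μ X' Y' hX' hY').hom
          = (μ X Y hX hY).hom ≫ F.map (f ⊗ₘ g))
    (hμassoc : ∀ {X Y Z : D} (hX : S X) (hY : S Y) (hZ : S Z),
        ((μ X Y hX hY).hom ▷ F.obj Z) ≫ (μ (X ⊗ Y) Z (hStensor X Y hX hY) hZ).hom ≫
            F.map (α_ X Y Z).hom
          = (α_ (F.obj X) (F.obj Y) (F.obj Z)).hom ≫ (F.obj X ◁ (μ Y Z hY hZ).hom) ≫
              (μ X (Y ⊗ Z) hX (hStensor Y Z hY hZ)).hom)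
    (hμunitl : ∀ {X : D} (hX : S X),
        (ε.inv ▷ F.obj X) ≫ (μ (𝟙_ D) X hS1 hX).hom ≫ F.map (λ_ X).hom
          = (λ_ (F.obj X)).hom)
    (hμunitr : ∀ {X : D} (hX : S X),
        (F.obj X ◁ ε.inv) ≫ (μ X (𝟙_ D) hX hS1).hom ≫ F.map (ρ_ X).hom
          = (ρ_ (F.obj X)).hom)
    (hpres : ∀ X : D, ∃ (Q P : D) (_ : S Q) (_ : S P) (_ : Projective Q) (_ : Projective P)
      (q : Q ⟶ P) (p : P ⟶ X), RightExactSeq q p) :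
    ∃ μ' : ∀ X Y : D, (F.obj X ⊗ F.obj Y ≅ F.obj (X ⊗ Y)),
      (∀ (X Y : D) (hX : S X) (hY : S Y), μ' X Y = μ X Y hX hY) ∧
      (∀ {X X' Y Y' : D} (f : X ⟶ X') (g : Y ⟶ Y'),
        (F.map f ⊗ₘ F.map g) ≫ (μ' X' Y').hom = (μ' X Y).hom ≫ F.map (f ⊗ₘ g)) ∧
      (∀ X Y Z : D,
        ((μ' X Y).hom ▷ F.obj Z) ≫ (μ' (X ⊗ Y) Z).hom ≫ F.map (α_ X Y Z).hom
          = (α_ (F.obj X) (F.obj Y) (F.obj Z)).hom ≫ (F.obj X ◁ (μ' Y Z).hom) ≫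
              (μ' X (Y ⊗ Z)).hom) ∧
      (∀ X : D, (ε.inv ▷ F.obj X) ≫ (μ' (𝟙_ D) X).hom ≫ F.map (λ_ X).hom
          = (λ_ (F.obj X)).hom) ∧
      (∀ X : D, (F.obj X ◁ ε.inv) ≫ (μ' X (𝟙_ D)).hom ≫ F.map (ρ_ X).hom
          = (ρ_ (F.obj X)).hom) := by

  classical
  choose Q P hSQ hSP projQ projP q p hre using hpres
  -- whiskering preserves epis in C
  have epiWR : ∀ {A B : C} (f : A ⟶ B), Epi f → ∀ Z : C, Epi (f ▷ Z) := by
    intro A B f hf Z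
    haveI := hf
    have := IsRightExactFunctor.epi_map (htC Z).2 f
    simpa using this
  have epiWL : ∀ {A B : C} (f : A ⟶ B), Epi f → ∀ Z : C, Epi (Z ◁ f) := by
    intro A B f hf Z
    haveI := hf
    have := IsRightExactFunctor.epi_map (htC Z).1 f
    simpa using this
  -- whiskering of zero morphisms
  have zeroWRD : ∀ {A B : D} (Z : D), (0 : A ⟶ B) ▷ Z = 0 := by
    intro A B Z
    have := IsRightExactFunctor.map_zero (htD Z).2 A B
    simpa using this
  have zeroWLD : ∀ {A B : D} (Z : D), Z ◁ (0 : A ⟶ B) = 0 := by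
    intro A B Z
    have := IsRightExactFunctor.map_zero (htD Z).1 A B
    simpa using this
  have zeroWRC : ∀ {A B : C} (Z : C), (0 : A ⟶ B) ▷ Z = 0 := by
    intro A B Z
    have := IsRightExactFunctor.map_zero (htC Z).2 A B
    simpa using this
  have zeroWLC : ∀ {A B : C} (Z : C), Z ◁ (0 : A ⟶ B) = 0 := by
    intro A B Z
    have := IsRightExactFunctor.map_zero (htC Z).1 A B
    simpa using this
  -- stage 1 : right exact sequences
  have reA₁ : ∀ (X : D) (B : C),
      RightExactSeq (F.map (q X) ▷ B) (F.map (p X) ▷ B) := by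
    intro X B
    have := (htC B).2 _ _ (hF _ _ (hre X))
    simpa using this
  have reB₁ : ∀ (X Y : D),
      RightExactSeq (F.map (q X ▷ Y)) (F.map (p X ▷ Y)) := by
    intro X Y
    have := hF _ _ ((htD Y).2 _ _ (hre X))
    simpa using this
  -- the key naturality square on resolutions, stage 1
  have sq₁ : ∀ (X Y : D) (hY : S Y),
      (F.map (q X) ▷ F.obj Y) ≫ (μ (P X) Y (hSP X) hY).hom
        = (μ (Q X) Y (hSQ X) hY).hom ≫ F.map (q X ▷ Y) := by
    intro X Y hY
    have h1 := hμnat (hSQ X) (hSP X) hY hY (q X) (𝟙 Y)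
    rw [F.map_id, tensorHom_id, tensorHom_id] at h1
    exact h1
  -- stage 1 tensorator
  have hμ₁ex : ∀ (X Y : D) (hY : S Y), ∃ ψ : F.obj X ⊗ F.obj Y ⟶ F.obj (X ⊗ Y),
      (F.map (p X) ▷ F.obj Y) ≫ ψ
        = (μ (P X) Y (hSP X) hY).hom ≫ F.map (p X ▷ Y) := by
    intro X Y hY
    apply (reA₁ X (F.obj Y)).desc
    rw [← Category.assoc, sq₁ X Y hY, Category.assoc, ← F.map_comp,
      ← comp_whiskerRight, (hre X).w, zeroWRD, IsRightExactFunctor.map_zero hF,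
      comp_zero]
  choose μ₁ hμ₁ using hμ₁ex
  have hμ₁S : ∀ (X Y : D) (hX : S X) (hY : S Y), μ₁ X Y hY = (μ X Y hX hY).hom := by
    intro X Y hX hY
    haveI := (reA₁ X (F.obj Y)).epi
    rw [← cancel_epi (F.map (p X) ▷ F.obj Y), hμ₁ X Y hY]
    have h1 := hμnat (hSP X) hX hY hY (p X) (𝟙 Y)
    rw [F.map_id, tensorHom_id, tensorHom_id] at h1
    exact h1.symm
  have hμ₁nat : ∀ {X X' Y Y' : D} (hY : S Y) (hY' : S Y') (f : X ⟶ X') (g : Y ⟶ Y'),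
      (F.map f ⊗ₘ F.map g) ≫ μ₁ X' Y' hY' = μ₁ X Y hY ≫ F.map (f ⊗ₘ g) := by
    intro X X' Y Y' hY hY' f g
    haveI := (hre X').epi
    haveI := projP X
    have hfac : Projective.factorThru (p X ≫ f) (p X') ≫ p X' = p X ≫ f :=
      Projective.factorThru_comp _ _
    set h : P X ⟶ P X' := Projective.factorThru (p X ≫ f) (p X') with hh
    haveI := (reA₁ X (F.obj Y)).epi
    rw [← cancel_epi (F.map (p X) ▷ F.obj Y)]
    have e1 : (F.map (p X) ▷ F.obj Y) ≫ (F.map f ⊗ₘ F.map g)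
        = (F.map h ⊗ₘ F.map g) ≫ (F.map (p X') ▷ F.obj Y') := by
      rw [← tensorHom_id, ← tensorHom_id, tensorHom_comp_tensorHom, tensorHom_comp_tensorHom,
        Category.id_comp, Category.comp_id, ← F.map_comp, ← F.map_comp, hfac]
    calc (F.map (p X) ▷ F.obj Y) ≫ (F.map f ⊗ₘ F.map g) ≫ μ₁ X' Y' hY'
        = (F.map h ⊗ₘ F.map g) ≫ ((F.map (p X') ▷ F.obj Y') ≫ μ₁ X' Y' hY') := by
          rw [← Category.assoc, e1, Category.assoc]
      _ = (F.map h ⊗ₘ F.map g) ≫ (μ (P X') Y' (hSP X') hY').hom ≫ F.map (p X' ▷ Y') := by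
          rw [hμ₁]
      _ = ((μ (P X) Y (hSP X) hY).hom ≫ F.map (h ⊗ₘ g)) ≫ F.map (p X' ▷ Y') := by
          rw [← Category.assoc, hμnat]
      _ = (μ (P X) Y (hSP X) hY).hom ≫ F.map ((p X ▷ Y) ≫ (f ⊗ₘ g)) := by
          rw [Category.assoc, ← F.map_comp]
          congr 2
          rw [← tensorHom_id, ← tensorHom_id, tensorHom_comp_tensorHom, tensorHom_comp_tensorHom,
            Category.id_comp, Category.comp_id, hfac]
      _ = (F.map (p X) ▷ F.obj Y) ≫ μ₁ X Y hY ≫ F.map (f ⊗ₘ g) := by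
          rw [F.map_comp, ← Category.assoc, ← hμ₁, Category.assoc]
  -- stage 1 inverse
  have hμ₁invex : ∀ (X Y : D) (hY : S Y), ∃ χ : F.obj (X ⊗ Y) ⟶ F.obj X ⊗ F.obj Y,
      F.map (p X ▷ Y) ≫ χ
        = (μ (P X) Y (hSP X) hY).inv ≫ (F.map (p X) ▷ F.obj Y) := by
    intro X Y hY
    apply (reB₁ X Y).desc
    have h2 : F.map (q X ▷ Y) ≫ (μ (P X) Y (hSP X) hY).inv
        = (μ (Q X) Y (hSQ X) hY).inv ≫ (F.map (q X) ▷ F.obj Y) := by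
      rw [Iso.eq_inv_comp, ← Category.assoc, ← sq₁ X Y hY]
      simp
    rw [← Category.assoc, h2, Category.assoc, ← comp_whiskerRight, ← F.map_comp,
      (hre X).w, IsRightExactFunctor.map_zero hF, zeroWRC, comp_zero]
  choose ν₁ hν₁ using hμ₁invex
  have hμ₁iso : ∀ (X Y : D) (hY : S Y), IsIso (μ₁ X Y hY) := by
    intro X Y hY
    refine ⟨ν₁ X Y hY, ?_, ?_⟩
    · haveI := (reA₁ X (F.obj Y)).epi
      rw [← cancel_epi (F.map (p X) ▷ F.obj Y), ← Category.assoc, hμ₁,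
        Category.assoc, hν₁, ← Category.assoc]
      simp
    · haveI := (reB₁ X Y).epi
      rw [← cancel_epi (F.map (p X ▷ Y)), ← Category.assoc, hν₁,
        Category.assoc, hμ₁, ← Category.assoc]
      simp
-- stage 2 : right exact sequences
  have reA2 : ∀ (A : C) (Y : D),
      RightExactSeq (A ◁ F.map (q Y)) (A ◁ F.map (p Y)) := by
    intro A Y
    have := (htC A).1 _ _ (hF _ _ (hre Y))
    simpa using this
  have reB2 : ∀ (X Y : D),
      RightExactSeq (F.map (X ◁ q Y)) (F.map (X ◁ p Y)) := by
    intro X Y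
    have := hF _ _ ((htD X).1 _ _ (hre Y))
    simpa using this
  -- the key naturality square on resolutions, stage 2
  have sq2 : ∀ (X Y : D),
      (F.obj X ◁ F.map (q Y)) ≫ μ₁ X (P Y) (hSP Y)
        = μ₁ X (Q Y) (hSQ Y) ≫ F.map (X ◁ q Y) := by
    intro X Y
    have h1 := hμ₁nat (hSQ Y) (hSP Y) (𝟙 X) (q Y)
    rw [F.map_id, id_tensorHom, id_tensorHom] at h1
    exact h1
  -- stage 2 tensorator
  have hμ₂ex : ∀ (X Y : D), ∃ ψ : F.obj X ⊗ F.obj Y ⟶ F.obj (X ⊗ Y),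
      (F.obj X ◁ F.map (p Y)) ≫ ψ
        = μ₁ X (P Y) (hSP Y) ≫ F.map (X ◁ p Y) := by
    intro X Y
    apply (reA2 (F.obj X) Y).desc
    rw [← Category.assoc, sq2 X Y, Category.assoc, ← F.map_comp,
      ← MonoidalCategory.whiskerLeft_comp, (hre Y).w, zeroWLD,
      IsRightExactFunctor.map_zero hF, comp_zero]
  choose μ₂ hμ₂ using hμ₂ex
  have hμ₂S : ∀ (X Y : D) (hY : S Y), μ₂ X Y = μ₁ X Y hY := by
    intro X Y hY
    haveI := (reA2 (F.obj X) Y).epi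
    rw [← cancel_epi (F.obj X ◁ F.map (p Y)), hμ₂ X Y]
    have h1 := hμ₁nat (hSP Y) hY (𝟙 X) (p Y)
    rw [F.map_id, id_tensorHom, id_tensorHom] at h1
    exact h1.symm
  have hμ₂nat : ∀ {X X' Y Y' : D} (f : X ⟶ X') (g : Y ⟶ Y'),
      (F.map f ⊗ₘ F.map g) ≫ μ₂ X' Y' = μ₂ X Y ≫ F.map (f ⊗ₘ g) := by
    intro X X' Y Y' f g
    haveI := (hre Y').epi
    haveI := projP Y
    have hfac : Projective.factorThru (p Y ≫ g) (p Y') ≫ p Y' = p Y ≫ g :=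
      Projective.factorThru_comp _ _
    set h : P Y ⟶ P Y' := Projective.factorThru (p Y ≫ g) (p Y') with hh
    haveI := (reA2 (F.obj X) Y).epi
    rw [← cancel_epi (F.obj X ◁ F.map (p Y))]
    have e1 : (F.obj X ◁ F.map (p Y)) ≫ (F.map f ⊗ₘ F.map g)
        = (F.map f ⊗ₘ F.map h) ≫ (F.obj X' ◁ F.map (p Y')) := by
      rw [← id_tensorHom, ← id_tensorHom, tensorHom_comp_tensorHom, tensorHom_comp_tensorHom,
        Category.id_comp, Category.comp_id, ← F.map_comp, ← F.map_comp, hfac]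
    calc (F.obj X ◁ F.map (p Y)) ≫ (F.map f ⊗ₘ F.map g) ≫ μ₂ X' Y'
        = (F.map f ⊗ₘ F.map h) ≫ ((F.obj X' ◁ F.map (p Y')) ≫ μ₂ X' Y') := by
          rw [← Category.assoc, e1, Category.assoc]
      _ = (F.map f ⊗ₘ F.map h) ≫ μ₁ X' (P Y') (hSP Y') ≫ F.map (X' ◁ p Y') := by
          rw [hμ₂]
      _ = (μ₁ X (P Y) (hSP Y) ≫ F.map (f ⊗ₘ h)) ≫ F.map (X' ◁ p Y') := by
          rw [← Category.assoc, hμ₁nat]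
      _ = μ₁ X (P Y) (hSP Y) ≫ F.map ((X ◁ p Y) ≫ (f ⊗ₘ g)) := by
          rw [Category.assoc, ← F.map_comp]
          congr 2
          rw [← id_tensorHom, ← id_tensorHom, tensorHom_comp_tensorHom, tensorHom_comp_tensorHom,
            Category.id_comp, Category.comp_id, hfac]
      _ = (F.obj X ◁ F.map (p Y)) ≫ μ₂ X Y ≫ F.map (f ⊗ₘ g) := by
          rw [F.map_comp, ← Category.assoc, ← hμ₂, Category.assoc]
  -- stage 2 inverse
  have hμ₂invex : ∀ (X Y : D), ∃ χ : F.obj (X ⊗ Y) ⟶ F.obj X ⊗ F.obj Y,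
      F.map (X ◁ p Y) ≫ χ
        = inv (μ₁ X (P Y) (hSP Y)) ≫ (F.obj X ◁ F.map (p Y)) := by
    intro X Y
    haveI := hμ₁iso X (P Y) (hSP Y)
    haveI := hμ₁iso X (Q Y) (hSQ Y)
    apply (reB2 X Y).desc
    have h2 : F.map (X ◁ q Y) ≫ inv (μ₁ X (P Y) (hSP Y))
        = inv (μ₁ X (Q Y) (hSQ Y)) ≫ (F.obj X ◁ F.map (q Y)) := by
      rw [IsIso.eq_inv_comp, ← Category.assoc, ← sq2 X Y]
      simp
    rw [← Category.assoc, h2, Category.assoc, ← MonoidalCategory.whiskerLeft_comp,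
      ← F.map_comp, (hre Y).w, IsRightExactFunctor.map_zero hF, zeroWLC, comp_zero]
  choose ν₂ hν₂ using hμ₂invex
  have hμ₂iso : ∀ (X Y : D), IsIso (μ₂ X Y) := by
    intro X Y
    haveI := hμ₁iso X (P Y) (hSP Y)
    refine ⟨ν₂ X Y, ?_, ?_⟩
    · haveI := (reA2 (F.obj X) Y).epi
      rw [← cancel_epi (F.obj X ◁ F.map (p Y)), ← Category.assoc, hμ₂,
        Category.assoc, hν₂, ← Category.assoc]
      simp
    · haveI := (reB2 X Y).epi
      rw [← cancel_epi (F.map (X ◁ p Y)), ← Category.assoc, hν₂,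
        Category.assoc, hμ₂, ← Category.assoc]
      simp
  have hμ₂μ : ∀ (X Y : D) (hX : S X) (hY : S Y), μ₂ X Y = (μ X Y hX hY).hom := by
    intro X Y hX hY
    rw [hμ₂S X Y hY, hμ₁S X Y hX hY]
  have epiF : ∀ X : D, Epi (F.map (p X)) := by
    intro X
    haveI := (hre X).epi
    exact IsRightExactFunctor.epi_map hF _
  have epiT : ∀ {A A' B B' : C} (f : A ⟶ A') (g : B ⟶ B'),
      Epi f → Epi g → Epi (f ⊗ₘ g) := by
    intro A A' B B' f g hf hg
    rw [MonoidalCategory.tensorHom_def]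
    exact @epi_comp _ _ _ _ _ _ (epiWR f hf B) _ (epiWL g hg A')
  refine ⟨fun X Y => @asIso _ _ _ _ (μ₂ X Y) (hμ₂iso X Y), ?_, ?_, ?_, ?_, ?_⟩
  · intro X Y hX hY
    exact Iso.ext (hμ₂μ X Y hX hY)
  · intro X X' Y Y' f g
    exact hμ₂nat f g
  · -- associativity
    intro X Y Z
    haveI ha := epiF X
    haveI hb := epiF Y
    haveI hc := epiF Z
    haveI he : Epi ((F.map (p X) ⊗ₘ F.map (p Y)) ⊗ₘ F.map (p Z)) :=
      epiT _ _ (epiT _ _ ha hb) hc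
    show (μ₂ X Y ▷ F.obj Z) ≫ μ₂ (X ⊗ Y) Z ≫ F.map (α_ X Y Z).hom
        = (α_ (F.obj X) (F.obj Y) (F.obj Z)).hom ≫ (F.obj X ◁ μ₂ Y Z) ≫ μ₂ X (Y ⊗ Z)
    rw [← cancel_epi ((F.map (p X) ⊗ₘ F.map (p Y)) ⊗ₘ F.map (p Z))]
    have c1 : (F.map (p X) ⊗ₘ F.map (p Y)) ≫ μ₂ X Y
        = (μ (P X) (P Y) (hSP X) (hSP Y)).hom ≫ F.map (p X ⊗ₘ p Y) := by
      rw [hμ₂nat, hμ₂μ _ _ (hSP X) (hSP Y)]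
    have c1' : (F.map (p Y) ⊗ₘ F.map (p Z)) ≫ μ₂ Y Z
        = (μ (P Y) (P Z) (hSP Y) (hSP Z)).hom ≫ F.map (p Y ⊗ₘ p Z) := by
      rw [hμ₂nat, hμ₂μ _ _ (hSP Y) (hSP Z)]
    have c2 : (F.map (p X ⊗ₘ p Y) ⊗ₘ F.map (p Z)) ≫ μ₂ (X ⊗ Y) Z
        = (μ (P X ⊗ P Y) (P Z) (hStensor _ _ (hSP X) (hSP Y)) (hSP Z)).hom ≫
            F.map ((p X ⊗ₘ p Y) ⊗ₘ p Z) := by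
      rw [hμ₂nat, hμ₂μ _ _ (hStensor _ _ (hSP X) (hSP Y)) (hSP Z)]
    have c5 : (F.map (p X) ⊗ₘ F.map (p Y ⊗ₘ p Z)) ≫ μ₂ X (Y ⊗ Z)
        = (μ (P X) (P Y ⊗ P Z) (hSP X) (hStensor _ _ (hSP Y) (hSP Z))).hom ≫
            F.map (p X ⊗ₘ (p Y ⊗ₘ p Z)) := by
      rw [hμ₂nat, hμ₂μ _ _ (hSP X) (hStensor _ _ (hSP Y) (hSP Z))]
    have L1 : ((F.map (p X) ⊗ₘ F.map (p Y)) ⊗ₘ F.map (p Z)) ≫ (μ₂ X Y ▷ F.obj Z)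
        = ((μ (P X) (P Y) (hSP X) (hSP Y)).hom ▷ F.obj (P Z)) ≫
            (F.map (p X ⊗ₘ p Y) ⊗ₘ F.map (p Z)) := by
      rw [← tensorHom_id, ← tensorHom_id, tensorHom_comp_tensorHom, tensorHom_comp_tensorHom,
        Category.comp_id, Category.id_comp, c1]
    have c4 : (F.map (p X) ⊗ₘ (F.map (p Y) ⊗ₘ F.map (p Z))) ≫ (F.obj X ◁ μ₂ Y Z)
        = (F.obj (P X) ◁ (μ (P Y) (P Z) (hSP Y) (hSP Z)).hom) ≫
            (F.map (p X) ⊗ₘ F.map (p Y ⊗ₘ p Z)) := by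
      rw [← id_tensorHom, ← id_tensorHom, tensorHom_comp_tensorHom, tensorHom_comp_tensorHom,
        Category.comp_id, Category.id_comp, c1']
    have hA := hμassoc (hSP X) (hSP Y) (hSP Z)
    calc ((F.map (p X) ⊗ₘ F.map (p Y)) ⊗ₘ F.map (p Z)) ≫
          (μ₂ X Y ▷ F.obj Z) ≫ μ₂ (X ⊗ Y) Z ≫ F.map (α_ X Y Z).hom
        = ((μ (P X) (P Y) (hSP X) (hSP Y)).hom ▷ F.obj (P Z)) ≫
            (F.map (p X ⊗ₘ p Y) ⊗ₘ F.map (p Z)) ≫ μ₂ (X ⊗ Y) Z ≫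
            F.map (α_ X Y Z).hom := by
          rw [← Category.assoc, L1, Category.assoc]
      _ = ((μ (P X) (P Y) (hSP X) (hSP Y)).hom ▷ F.obj (P Z)) ≫
            (μ (P X ⊗ P Y) (P Z) (hStensor _ _ (hSP X) (hSP Y)) (hSP Z)).hom ≫
            F.map ((p X ⊗ₘ p Y) ⊗ₘ p Z) ≫ F.map (α_ X Y Z).hom := by
          rw [← Category.assoc (F.map (p X ⊗ₘ p Y) ⊗ₘ F.map (p Z)), c2, Category.assoc]
      _ = ((μ (P X) (P Y) (hSP X) (hSP Y)).hom ▷ F.obj (P Z)) ≫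
            (μ (P X ⊗ P Y) (P Z) (hStensor _ _ (hSP X) (hSP Y)) (hSP Z)).hom ≫
            F.map (α_ (P X) (P Y) (P Z)).hom ≫ F.map (p X ⊗ₘ (p Y ⊗ₘ p Z)) := by
          rw [← F.map_comp, ← F.map_comp, associator_naturality]
      _ = ((α_ (F.obj (P X)) (F.obj (P Y)) (F.obj (P Z))).hom ≫
            (F.obj (P X) ◁ (μ (P Y) (P Z) (hSP Y) (hSP Z)).hom) ≫
            (μ (P X) (P Y ⊗ P Z) (hSP X) (hStensor _ _ (hSP Y) (hSP Z))).hom) ≫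
            F.map (p X ⊗ₘ (p Y ⊗ₘ p Z)) := by
          rw [← hA]
          simp only [Category.assoc]
      _ = (α_ (F.obj (P X)) (F.obj (P Y)) (F.obj (P Z))).hom ≫
            (F.obj (P X) ◁ (μ (P Y) (P Z) (hSP Y) (hSP Z)).hom) ≫
            (F.map (p X) ⊗ₘ F.map (p Y ⊗ₘ p Z)) ≫ μ₂ X (Y ⊗ Z) := by
          rw [c5]
          simp only [Category.assoc]
      _ = (α_ (F.obj (P X)) (F.obj (P Y)) (F.obj (P Z))).hom ≫
            (F.map (p X) ⊗ₘ (F.map (p Y) ⊗ₘ F.map (p Z))) ≫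
            (F.obj X ◁ μ₂ Y Z) ≫ μ₂ X (Y ⊗ Z) := by
          rw [← Category.assoc (F.map (p X) ⊗ₘ (F.map (p Y) ⊗ₘ F.map (p Z))), c4,
            Category.assoc]
      _ = ((F.map (p X) ⊗ₘ F.map (p Y)) ⊗ₘ F.map (p Z)) ≫
            (α_ (F.obj X) (F.obj Y) (F.obj Z)).hom ≫
            (F.obj X ◁ μ₂ Y Z) ≫ μ₂ X (Y ⊗ Z) := by
          rw [← Category.assoc, ← associator_naturality, Category.assoc]
  · -- left unitality
    intro X
    haveI := epiF X
    haveI := epiWL (F.map (p X)) (epiF X) (𝟙_ C)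
    show (ε.inv ▷ F.obj X) ≫ μ₂ (𝟙_ D) X ≫ F.map (λ_ X).hom = (λ_ (F.obj X)).hom
    rw [← cancel_epi (𝟙_ C ◁ F.map (p X))]
    have u1 : (𝟙_ C ◁ F.map (p X)) ≫ (ε.inv ▷ F.obj X)
        = (ε.inv ▷ F.obj (P X)) ≫ (F.obj (𝟙_ D) ◁ F.map (p X)) := by
      rw [← id_tensorHom, ← id_tensorHom, ← tensorHom_id, ← tensorHom_id,
        tensorHom_comp_tensorHom, tensorHom_comp_tensorHom, Category.comp_id, Category.id_comp,
        Category.comp_id, Category.id_comp]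
    have u2 : (F.obj (𝟙_ D) ◁ F.map (p X)) ≫ μ₂ (𝟙_ D) X
        = (μ (𝟙_ D) (P X) hS1 (hSP X)).hom ≫ F.map (𝟙_ D ◁ p X) := by
      have h1 := hμ₂nat (𝟙 (𝟙_ D)) (p X)
      rw [F.map_id, id_tensorHom, id_tensorHom] at h1
      rw [h1, hμ₂μ _ _ hS1 (hSP X)]
    have u3 : F.map (𝟙_ D ◁ p X) ≫ F.map (λ_ X).hom
        = F.map (λ_ (P X)).hom ≫ F.map (p X) := by
      rw [← F.map_comp, ← F.map_comp, MonoidalCategory.leftUnitor_naturality]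
    calc (𝟙_ C ◁ F.map (p X)) ≫ (ε.inv ▷ F.obj X) ≫ μ₂ (𝟙_ D) X ≫ F.map (λ_ X).hom
        = (ε.inv ▷ F.obj (P X)) ≫ (F.obj (𝟙_ D) ◁ F.map (p X)) ≫ μ₂ (𝟙_ D) X ≫
            F.map (λ_ X).hom := by
          rw [← Category.assoc, u1, Category.assoc]
      _ = (ε.inv ▷ F.obj (P X)) ≫ (μ (𝟙_ D) (P X) hS1 (hSP X)).hom ≫
            F.map (𝟙_ D ◁ p X) ≫ F.map (λ_ X).hom := by
          rw [← Category.assoc (F.obj (𝟙_ D) ◁ F.map (p X)), u2, Category.assoc]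
      _ = ((ε.inv ▷ F.obj (P X)) ≫ (μ (𝟙_ D) (P X) hS1 (hSP X)).hom ≫
            F.map (λ_ (P X)).hom) ≫ F.map (p X) := by
          rw [u3]
          simp only [Category.assoc]
      _ = (λ_ (F.obj (P X))).hom ≫ F.map (p X) := by rw [hμunitl (hSP X)]
      _ = (𝟙_ C ◁ F.map (p X)) ≫ (λ_ (F.obj X)).hom := by
          rw [MonoidalCategory.leftUnitor_naturality]
  · -- right unitality
    intro X
    haveI := epiF X
    haveI := epiWR (F.map (p X)) (epiF X) (𝟙_ C)
    show (F.obj X ◁ ε.inv) ≫ μ₂ X (𝟙_ D) ≫ F.map (ρ_ X).hom = (ρ_ (F.obj X)).hom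
    rw [← cancel_epi (F.map (p X) ▷ 𝟙_ C)]
    have u1 : (F.map (p X) ▷ 𝟙_ C) ≫ (F.obj X ◁ ε.inv)
        = (F.obj (P X) ◁ ε.inv) ≫ (F.map (p X) ▷ F.obj (𝟙_ D)) := by
      rw [← id_tensorHom, ← id_tensorHom, ← tensorHom_id, ← tensorHom_id,
        tensorHom_comp_tensorHom, tensorHom_comp_tensorHom, Category.comp_id, Category.id_comp,
        Category.comp_id, Category.id_comp]
    have u2 : (F.map (p X) ▷ F.obj (𝟙_ D)) ≫ μ₂ X (𝟙_ D)
        = (μ (P X) (𝟙_ D) (hSP X) hS1).hom ≫ F.map (p X ▷ 𝟙_ D) := by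
      have h1 := hμ₂nat (p X) (𝟙 (𝟙_ D))
      rw [F.map_id, tensorHom_id, tensorHom_id] at h1
      rw [h1, hμ₂μ _ _ (hSP X) hS1]
    have u3 : F.map (p X ▷ 𝟙_ D) ≫ F.map (ρ_ X).hom
        = F.map (ρ_ (P X)).hom ≫ F.map (p X) := by
      rw [← F.map_comp, ← F.map_comp, MonoidalCategory.rightUnitor_naturality]
    calc (F.map (p X) ▷ 𝟙_ C) ≫ (F.obj X ◁ ε.inv) ≫ μ₂ X (𝟙_ D) ≫ F.map (ρ_ X).hom
        = (F.obj (P X) ◁ ε.inv) ≫ (F.map (p X) ▷ F.obj (𝟙_ D)) ≫ μ₂ X (𝟙_ D) ≫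
            F.map (ρ_ X).hom := by
          rw [← Category.assoc, u1, Category.assoc]
      _ = (F.obj (P X) ◁ ε.inv) ≫ (μ (P X) (𝟙_ D) (hSP X) hS1).hom ≫
            F.map (p X ▷ 𝟙_ D) ≫ F.map (ρ_ X).hom := by
          rw [← Category.assoc (F.map (p X) ▷ F.obj (𝟙_ D)), u2, Category.assoc]
      _ = ((F.obj (P X) ◁ ε.inv) ≫ (μ (P X) (𝟙_ D) (hSP X) hS1).hom ≫
            F.map (ρ_ (P X)).hom) ≫ F.map (p X) := by
          rw [u3]
          simp only [Category.assoc]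
      _ = (ρ_ (F.obj (P X))).hom ≫ F.map (p X) := by rw [hμunitr (hSP X)]
      _ = (F.map (p X) ▷ 𝟙_ C) ≫ (ρ_ (F.obj X)).hom := by
          rw [MonoidalCategory.rightUnitor_naturality]
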